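/- ℤ[x_1,…,x_n] is a free module over the subring of symmetric polynomials ℤ[x_1,…,x_n]^{S_n}, with basis the monomials x_1^{a_1}⋯x_n^{a_n} with 0 ≤ a_i ≤ n − i; in particular its rank is n!. -/

import Mathlib

open MvPolynomial Finset

noncomputable section

def ehat {n : ℕ} (e : Equiv.Perm (Fin n)) : Equiv.Perm (Fin (n + 1)) :=
  (finSuccEquiv n).symm.permCongr e.optionCongr

@[simp] lemma ehat_zero {n : ℕ} (e : Equiv.Perm (Fin n)) : ehat e 0 = 0 := by
  simp [ehat, Equiv.permCongr_apply]

@[simp] lemma ehat_succ {n : ℕ} (e : Equiv.Perm (Fin n)) (i : Fin n) :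
    ehat e i.succ = (e i).succ := by
  simp [ehat, Equiv.permCongr_apply]

lemma finSuccEquiv_rename_ehat {n : ℕ} (e : Equiv.Perm (Fin n)) (p : MvPolynomial (Fin (n+1)) ℤ) :
    MvPolynomial.finSuccEquiv ℤ n (rename (ehat e) p)
      = Polynomial.map (↑(rename (e : Fin n → Fin n) : MvPolynomial (Fin n) ℤ →ₐ[ℤ] _))
          (MvPolynomial.finSuccEquiv ℤ n p) := by
  have h : ((MvPolynomial.finSuccEquiv ℤ n).toAlgHom.comp (rename (ehat e)))
      = (Polynomial.mapAlgHom (rename (e : Fin n → Fin n))).comp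
          (MvPolynomial.finSuccEquiv ℤ n).toAlgHom := by
    apply MvPolynomial.algHom_ext
    intro i
    refine Fin.cases ?_ (fun j => ?_) i <;>
      simp [finSuccEquiv_X_zero, finSuccEquiv_X_succ, Polynomial.mapAlgHom]
  exact congrFun (congrArg (fun f => f.toFun) h) p

/-- the coefficients (w.r.t. `x₀`) of a symmetric polynomial are symmetric in the tail vars -/
lemma symCoeff_of_mem {n : ℕ} {p : MvPolynomial (Fin (n+1)) ℤ}
    (hp : p ∈ symmetricSubalgebra (Fin (n+1)) ℤ) (k : ℕ) :
    (MvPolynomial.finSuccEquiv ℤ n p).coeff k ∈ symmetricSubalgebra (Fin n) ℤ := by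
  rw [mem_symmetricSubalgebra] at *
  intro e
  have := finSuccEquiv_rename_ehat e p
  rw [hp (ehat e)] at this
  calc rename e ((MvPolynomial.finSuccEquiv ℤ n p).coeff k)
      = (Polynomial.map (↑(rename (e : Fin n → Fin n) : MvPolynomial (Fin n) ℤ →ₐ[ℤ] _))
          (MvPolynomial.finSuccEquiv ℤ n p)).coeff k := by
        rw [Polynomial.coeff_map]; rfl
    _ = _ := by rw [← this]
lemma esymm_rec (n j : ℕ) :
    esymm (Fin (n+1)) ℤ (j+1)
      = rename Fin.succ (esymm (Fin n) ℤ (j+1)) + X 0 * rename Fin.succ (esymm (Fin n) ℤ j) := by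
  classical
  have hrn : ∀ k : ℕ, rename (Fin.succ : Fin n → Fin (n+1)) (esymm (Fin n) ℤ k)
      = ∑ t ∈ powersetCard k (univ.map ⟨Fin.succ, Fin.succ_injective n⟩),
          ∏ i ∈ t, (X i : MvPolynomial (Fin (n+1)) ℤ) := by
    intro k
    rw [esymm, map_sum, powersetCard_map, Finset.sum_map]
    refine Finset.sum_congr rfl fun t _ => ?_
    rw [map_prod]
    rw [show (mapEmbedding ⟨Fin.succ, Fin.succ_injective n⟩).toEmbedding t
        = t.map ⟨Fin.succ, Fin.succ_injective n⟩ from Finset.mapEmbedding_apply ..]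
    rw [Finset.prod_map]
    simp [rename_X]
  set S : Finset (Fin (n+1)) := univ.map ⟨Fin.succ, Fin.succ_injective n⟩ with hS
  have h0S : (0 : Fin (n+1)) ∉ S := by simp [hS, Fin.succ_ne_zero]
  have huniv : (univ : Finset (Fin (n+1))) = insert 0 S := by
    rw [Fin.univ_succ]; rw [Finset.cons_eq_insert]
  rw [esymm, huniv, powersetCard_succ_insert h0S]
  have hdisj : Disjoint (powersetCard (j+1) S) ((powersetCard j S).image (insert 0)) := by
    rw [Finset.disjoint_left]
    intro t ht ht'
    obtain ⟨u, hu, rfl⟩ := Finset.mem_image.mp ht'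
    have : (0 : Fin (n+1)) ∈ insert 0 u := Finset.mem_insert_self _ _
    have hsub := (Finset.mem_powersetCard.mp ht).1
    exact h0S (hsub this)
  rw [Finset.sum_union hdisj, hrn, hrn]
  congr 1
  rw [Finset.sum_image]
  · rw [Finset.mul_sum]
    refine Finset.sum_congr rfl fun t ht => ?_
    have h0t : (0 : Fin (n+1)) ∉ t := fun h => h0S ((Finset.mem_powersetCard.mp ht).1 h)
    rw [Finset.prod_insert h0t]
  · intro a ha b hb hab
    have h0a : (0 : Fin (n+1)) ∉ a := fun h => h0S ((Finset.mem_powersetCard.mp ha).1 h)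
    have h0b : (0 : Fin (n+1)) ∉ b := fun h => h0S ((Finset.mem_powersetCard.mp hb).1 h)
    have := congrArg (Finset.erase · (0 : Fin (n+1))) hab
    simpa [Finset.erase_insert, h0a, h0b] using this
noncomputable section

lemma x0_relation (n : ℕ) :
    (X 0 : MvPolynomial (Fin (n+1)) ℤ) ^ (n+1)
      = ∑ j ∈ Finset.range (n+1),
          (((-1:ℤ) ^ j) • esymm (Fin (n+1)) ℤ (j+1)) * (X 0) ^ (n - j) := by
  classical
  set s : Multiset (MvPolynomial (Fin (n+1)) ℤ) :=
    Finset.univ.val.map fun i : Fin (n+1) => (X i : MvPolynomial (Fin (n+1)) ℤ) with hs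
  have key : Polynomial.eval (X 0 : MvPolynomial (Fin (n+1)) ℤ)
      (s.map (fun t => Polynomial.X - Polynomial.C t)).prod = 0 := by
    rw [Polynomial.eval_multiset_prod]
    refine Multiset.prod_eq_zero ?_
    rw [hs, Multiset.map_map, Multiset.map_map]
    exact Multiset.mem_map.mpr ⟨0, by simp, by simp⟩
  have hcard : Multiset.card s = n + 1 := by simp [hs]
  have hesymm : ∀ j, s.esymm j = esymm (Fin (n+1)) ℤ j := by
    intro j; rw [esymm_eq_multiset_esymm]
  rw [Multiset.prod_X_sub_X_eq_sum_esymm, hcard] at key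
  rw [Polynomial.eval_finset_sum] at key
  simp only [Polynomial.eval_mul, Polynomial.eval_pow, Polynomial.eval_neg, Polynomial.eval_one,
    Polynomial.eval_C, Polynomial.eval_X, hesymm] at key
  rw [Finset.sum_range_succ'] at key
  simp only [pow_zero, one_mul, esymm_zero, Nat.sub_zero] at key
  have := eq_neg_of_add_eq_zero_right key
  rw [this, ← Finset.sum_neg_distrib]
  refine Finset.sum_congr rfl fun j _ => ?_
  rw [Nat.succ_sub_succ]
  rw [zsmul_eq_mul]
  push_cast
  ring

lemma finSuccEquiv_rename_succ {n : ℕ} (q : MvPolynomial (Fin n) ℤ) :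
    MvPolynomial.finSuccEquiv ℤ n (rename Fin.succ q) = Polynomial.C q := by
  have h : (MvPolynomial.finSuccEquiv ℤ n).toAlgHom.comp (rename (Fin.succ : Fin n → Fin (n+1)))
      = Polynomial.CAlgHom := by
    apply MvPolynomial.algHom_ext
    intro i
    simp [finSuccEquiv_X_succ, Polynomial.CAlgHom]
  exact congrFun (congrArg (fun f => f.toFun) h) q

/-- predicate: all x₀-coefficients are symmetric in the remaining variables -/
def SymC {n : ℕ} (m : MvPolynomial (Fin (n+1)) ℤ) : Prop :=
  ∀ k, (MvPolynomial.finSuccEquiv ℤ n m).coeff k ∈ symmetricSubalgebra (Fin n) ℤ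

lemma SymC_add {n : ℕ} {a b : MvPolynomial (Fin (n+1)) ℤ} (ha : SymC a) (hb : SymC b) :
    SymC (a + b) := fun k => by
  rw [map_add, Polynomial.coeff_add]; exact add_mem (ha k) (hb k)

lemma SymC_mul {n : ℕ} {a b : MvPolynomial (Fin (n+1)) ℤ} (ha : SymC a) (hb : SymC b) :
    SymC (a * b) := fun k => by
  rw [map_mul, Polynomial.coeff_mul]
  exact sum_mem fun c _ => mul_mem (ha c.1) (hb c.2)

lemma SymC_X0 {n : ℕ} : SymC (X 0 : MvPolynomial (Fin (n+1)) ℤ) := fun k => by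
  rw [finSuccEquiv_X_zero, Polynomial.coeff_X]
  split <;> simp [Subalgebra.one_mem, Subalgebra.zero_mem]

lemma SymC_sym {n : ℕ} {p : MvPolynomial (Fin (n+1)) ℤ}
    (hp : p ∈ symmetricSubalgebra (Fin (n+1)) ℤ) : SymC p := symCoeff_of_mem hp

lemma SymC_sum {n : ℕ} {ι : Type*} (s : Finset ι) (f : ι → MvPolynomial (Fin (n+1)) ℤ)
    (hf : ∀ i ∈ s, SymC (f i)) : SymC (∑ i ∈ s, f i) := by
  classical
  induction s using Finset.induction_on with
  | empty => intro k; rw [Finset.sum_empty]; simp only [map_zero, Polynomial.coeff_zero]; exact zero_mem _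
  | insert a s h ih =>
    rw [Finset.sum_insert h]
    exact SymC_add (hf _ (Finset.mem_insert_self _ _))
      (ih fun i hi => hf i (Finset.mem_insert_of_mem hi))

lemma SymC_pow {n : ℕ} {a : MvPolynomial (Fin (n+1)) ℤ} (ha : SymC a) (k : ℕ) : SymC (a ^ k) := by
  induction k with
  | zero => intro k; rw [pow_zero, map_one, Polynomial.coeff_one]; split <;> [exact one_mem _; exact zero_mem _]
  | succ m ih => rw [pow_succ]; exact SymC_mul ih ha

section Step
variable (n : ℕ)

local notation "Λ'" => symmetricSubalgebra (Fin (n+1)) ℤ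

/-- span of the powers `x₀^a`, `a ≤ n`, over the symmetric polynomials -/
def NN : Submodule (symmetricSubalgebra (Fin (n+1)) ℤ) (MvPolynomial (Fin (n+1)) ℤ) :=
  Submodule.span _ (Set.range fun a : Fin (n+1) => (X 0 : MvPolynomial (Fin (n+1)) ℤ) ^ (a:ℕ))

lemma pow0_mem_NN (k : ℕ) : (X 0 : MvPolynomial (Fin (n+1)) ℤ) ^ k ∈ NN n := by
  induction k using Nat.strong_induction_on with
  | _ k ih =>
    rcases le_or_gt k n with hk | hk
    · exact Submodule.subset_span ⟨⟨k, Nat.lt_succ_of_le hk⟩, rfl⟩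
    · have hk' : k = (n+1) + (k - (n+1)) := by omega
      rw [hk', pow_add, x0_relation, Finset.sum_mul]
      refine sum_mem fun j hj => ?_
      have hj' : j < n + 1 := Finset.mem_range.mp hj
      rw [mul_assoc, ← pow_add]
      have hmem : ((-1:ℤ)^j • esymm (Fin (n+1)) ℤ (j+1)) ∈ Λ' :=
        Subalgebra.smul_mem _
          ((mem_symmetricSubalgebra _).mpr (esymm_isSymmetric _ _ _)) _
      exact Submodule.smul_mem _ (⟨_, hmem⟩ : Λ') (ih _ (by omega))

lemma NN_mul_left {x : MvPolynomial (Fin (n+1)) ℤ}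
    (hx : ∀ k, x * (X 0) ^ k ∈ NN n) {z : MvPolynomial (Fin (n+1)) ℤ} (hz : z ∈ NN n) :
    x * z ∈ NN n := by
  induction hz using Submodule.span_induction with
  | mem z hzz => obtain ⟨a, rfl⟩ := hzz; exact hx a
  | zero => simpa using zero_mem _
  | add y z _ _ hy hz => rw [mul_add]; exact add_mem hy hz
  | smul c y _ hy => rw [Algebra.mul_smul_comm]; exact Submodule.smul_mem _ _ hy

/-- `Λ'[x₀]` -/
def MM : Subalgebra (symmetricSubalgebra (Fin (n+1)) ℤ) (MvPolynomial (Fin (n+1)) ℤ) :=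
  Algebra.adjoin _ {(X 0 : MvPolynomial (Fin (n+1)) ℤ)}

lemma MM_mul_pow_mem_NN {p : MvPolynomial (Fin (n+1)) ℤ} (hp : p ∈ MM n) (k : ℕ) :
    p * (X 0) ^ k ∈ NN n := by
  induction hp using Algebra.adjoin_induction generalizing k with
  | mem x hx =>
    rcases hx with rfl
    rw [← pow_succ']
    exact pow0_mem_NN n _
  | algebraMap r =>
    exact Submodule.smul_mem _ r (pow0_mem_NN n k)
  | add x y _ _ hx hy => rw [add_mul]; exact add_mem (hx k) (hy k)
  | mul x y _ _ hx hy =>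
    rw [mul_assoc]
    exact NN_mul_left n (fun m => hx m) (hy k)

lemma MM_mem_NN {p : MvPolynomial (Fin (n+1)) ℤ} (hp : p ∈ MM n) : p ∈ NN n := by
  simpa using MM_mul_pow_mem_NN n hp 0


lemma rename_esymm_mem_MM (j : ℕ) :
    rename (Fin.succ : Fin n → Fin (n+1)) (esymm (Fin n) ℤ j) ∈ MM n := by
  induction j with
  | zero => rw [esymm_zero, map_one]; exact one_mem _
  | succ j ih =>
    have h := esymm_rec n j
    have h2 : rename (Fin.succ : Fin n → Fin (n+1)) (esymm (Fin n) ℤ (j+1))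
        = esymm (Fin (n+1)) ℤ (j+1) - X 0 * rename Fin.succ (esymm (Fin n) ℤ j) := by
      rw [h]; ring
    rw [h2]
    refine sub_mem ?_ (mul_mem (Algebra.subset_adjoin rfl) ih)
    have hmem : esymm (Fin (n+1)) ℤ (j+1) ∈ Λ' :=
      (mem_symmetricSubalgebra _).mpr (esymm_isSymmetric _ _ _)
    exact (MM n).algebraMap_mem (⟨_, hmem⟩ : Λ')

lemma aeval_esymm_mem_MM (q : MvPolynomial (Fin n) ℤ) :
    aeval (fun i : Fin n => rename (Fin.succ : Fin n → Fin (n+1))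
      (esymm (Fin n) ℤ (i + 1))) q ∈ MM n := by
  induction q using MvPolynomial.induction_on with
  | C a =>
    rw [aeval_C, eq_intCast]
    exact intCast_mem (MM n) a
  | add p q hp hq => rw [map_add]; exact add_mem hp hq
  | mul_X p i hp => rw [map_mul, aeval_X]; exact mul_mem hp (rename_esymm_mem_MM n _)

lemma symm_tail_mem_MM {r : MvPolynomial (Fin n) ℤ}
    (hr : r ∈ symmetricSubalgebra (Fin n) ℤ) :
    rename (Fin.succ : Fin n → Fin (n+1)) r ∈ MM n := by
  obtain ⟨q, hq⟩ := esymmAlgHom_surjective (σ := Fin n) (R := ℤ) (n := n)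
    (by simp) ⟨r, hr⟩
  have hr' : r = aeval (fun i : Fin n => esymm (Fin n) ℤ (i + 1)) q := by
    have := congrArg Subtype.val hq
    rw [esymmAlgHom_apply] at this
    exact this.symm
  rw [hr']
  rw [show (rename (Fin.succ : Fin n → Fin (n+1)))
        (aeval (fun i : Fin n => esymm (Fin n) ℤ (i + 1)) q)
      = aeval (fun i : Fin n => rename (Fin.succ : Fin n → Fin (n+1))
          (esymm (Fin n) ℤ (i + 1))) q from ?_]
  · exact aeval_esymm_mem_MM n q
  · rw [← comp_aeval]; rfl

lemma vandermonde_indep (c : Fin (n+1) → Λ')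
    (h : ∑ a : Fin (n+1), (c a : MvPolynomial (Fin (n+1)) ℤ) * (X 0) ^ (a : ℕ) = 0) :
    c = 0 := by
  classical
  set V := Matrix.vandermonde (fun i : Fin (n+1) => (X i : MvPolynomial (Fin (n+1)) ℤ)) with hV
  have hrow : ∀ i : Fin (n+1),
      ∑ a : Fin (n+1), (c a : MvPolynomial (Fin (n+1)) ℤ) * (X i) ^ (a : ℕ) = 0 := by
    intro i
    have := congrArg (rename (Equiv.swap (0 : Fin (n+1)) i : Equiv.Perm (Fin (n+1)))) h
    rw [map_sum, map_zero] at this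
    convert this using 2 with a
    rw [map_mul, map_pow, rename_X, Equiv.swap_apply_left]
    congr 1
    exact ((mem_symmetricSubalgebra _).mp (c a).2 _).symm
  have hmv : V.mulVec (fun a => (c a : MvPolynomial (Fin (n+1)) ℤ)) = 0 := by
    funext i
    rw [Matrix.mulVec]
    simpa [dotProduct, hV, Matrix.vandermonde, mul_comm] using hrow i
  have hdet : V.det ≠ 0 := by
    rw [hV, Matrix.det_vandermonde]
    refine Finset.prod_ne_zero_iff.mpr fun i _ => Finset.prod_ne_zero_iff.mpr fun j hj => ?_
    refine sub_ne_zero.mpr fun hXX => ?_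
    have := MvPolynomial.X_injective (R := ℤ) hXX
    rw [Finset.mem_Ioi] at hj
    exact hj.ne this.symm
  have h2 : V.det • (fun a => (c a : MvPolynomial (Fin (n+1)) ℤ)) = 0 := by
    have := congrArg V.adjugate.mulVec hmv
    rwa [Matrix.mulVec_mulVec, Matrix.adjugate_mul, Matrix.smul_mulVec,
      Matrix.one_mulVec, Matrix.mulVec_zero] at this
  funext a
  have h3 : V.det * (c a : MvPolynomial (Fin (n+1)) ℤ) = 0 := congrFun h2 a
  rcases mul_eq_zero.mp h3 with h4 | h4
  · exact absurd h4 hdet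
  · exact Subtype.ext h4

end Step

def Stair (n : ℕ) := {d : Fin n → ℕ // ∀ i : Fin n, d i + (i : ℕ) < n}

def xp {n : ℕ} (d : Fin n → ℕ) : MvPolynomial (Fin n) ℤ := ∏ i, X i ^ d i

def vv {n : ℕ} (d : Stair n) : MvPolynomial (Fin (n+1)) ℤ := rename Fin.succ (xp d.1)

lemma xp_cons {n : ℕ} (a : ℕ) (d : Fin n → ℕ) :
    xp (Fin.cons a d) = (X 0 : MvPolynomial (Fin (n+1)) ℤ) ^ a * rename Fin.succ (xp d) := by
  rw [xp, Fin.prod_univ_succ, xp, map_prod]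
  simp [Fin.cons_succ, Fin.cons_zero, map_pow, rename_X]

def stairEquiv (n : ℕ) : Stair (n+1) ≃ Fin (n+1) × Stair n where
  toFun d := (⟨d.1 0, by simpa using d.2 0⟩,
    ⟨fun i => d.1 i.succ, fun i => by have h := d.2 i.succ; rw [Fin.val_succ] at h; show d.1 i.succ + (i:ℕ) < n; omega⟩)
  invFun p := ⟨Fin.cons (p.1 : ℕ) p.2.1, by
    intro i
    refine Fin.cases ?_ (fun j => ?_) i
    · simpa using p.1.isLt
    · rw [Fin.cons_succ, Fin.val_succ]
      have := p.2.2 j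
      omega⟩
  left_inv d := Subtype.ext (Fin.cons_self_tail d.1)
  right_inv p := by
    refine Prod.ext (Fin.ext ?_) (Subtype.ext ?_)
    · simp
    · funext i
      simp [Fin.cons_succ]

lemma indep_v {n : ℕ}
    (hInd : LinearIndependent (symmetricSubalgebra (Fin n) ℤ) (fun d : Stair n => xp d.1))
    (t : Finset (Stair n)) (m : Stair n → MvPolynomial (Fin (n+1)) ℤ)
    (hm : ∀ d ∈ t, SymC (m d))
    (h : ∑ d ∈ t, m d * vv d = 0) : ∀ d ∈ t, m d = 0 := by
  classical
  have hφ : ∀ k : ℕ, ∑ d ∈ t, ((MvPolynomial.finSuccEquiv ℤ n (m d)).coeff k) * xp d.1 = 0 := by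
    intro k
    have h2 := congrArg (fun q => ((MvPolynomial.finSuccEquiv ℤ n) q).coeff k) h
    simp only [map_sum, map_zero, Polynomial.coeff_zero, Polynomial.finset_sum_coeff] at h2
    rw [← h2]
    refine Finset.sum_congr rfl fun d hd => ?_
    rw [map_mul, vv, finSuccEquiv_rename_succ, Polynomial.coeff_mul_C]
  intro d hd
  have hz : ∀ k, (MvPolynomial.finSuccEquiv ℤ n (m d)).coeff k = 0 := by
    intro k
    have hg := linearIndependent_iff'.mp hInd t
      (fun d' => if hd' : d' ∈ t then ⟨_, hm d' hd' k⟩ else 0) ?_ d hd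
    · simp only [dif_pos hd] at hg
      exact congrArg Subtype.val hg
    · rw [← hφ k]
      refine Finset.sum_congr rfl fun d' hd' => ?_
      simp only [dif_pos hd']
      rfl
  have hφ0 : MvPolynomial.finSuccEquiv ℤ n (m d) = 0 := Polynomial.ext fun k => hz k
  exact (map_eq_zero_iff _ (AlgEquiv.injective _)).mp hφ0

lemma NN_mul_vv_mem {n : ℕ} (d' : Stair n) {z : MvPolynomial (Fin (n+1)) ℤ} (hz : z ∈ NN n) :
    z * vv d' ∈ Submodule.span (symmetricSubalgebra (Fin (n+1)) ℤ)
      (Set.range fun d : Stair (n+1) => xp d.1) := by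
  induction hz using Submodule.span_induction with
  | mem z hzz =>
    obtain ⟨a, rfl⟩ := hzz
    refine Submodule.subset_span ⟨(stairEquiv n).symm (a, d'), ?_⟩
    show xp (Fin.cons (a : ℕ) d'.1) = _
    rw [xp_cons]
    rfl
  | zero => rw [zero_mul]; exact zero_mem _
  | add x y _ _ hx hy => rw [add_mul]; exact add_mem hx hy
  | smul c x _ hx => rw [Algebra.smul_mul_assoc]; exact Submodule.smul_mem _ _ hx

lemma MM_mul_span {n : ℕ} {μ q : MvPolynomial (Fin (n+1)) ℤ} (hμ : μ ∈ MM n)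
    (hq : q ∈ Submodule.span (symmetricSubalgebra (Fin (n+1)) ℤ)
      (Set.range fun d : Stair (n+1) => xp d.1)) :
    μ * q ∈ Submodule.span (symmetricSubalgebra (Fin (n+1)) ℤ)
      (Set.range fun d : Stair (n+1) => xp d.1) := by
  induction hq using Submodule.span_induction with
  | mem q hqq =>
    obtain ⟨d, rfl⟩ := hqq
    have hd : xp d.1 = (X 0 : MvPolynomial (Fin (n+1)) ℤ) ^ (d.1 0)
        * rename Fin.succ (xp (Fin.tail d.1)) := by
      conv_lhs => rw [← Fin.cons_self_tail d.1]
      rw [xp_cons]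
    show μ * xp d.1 ∈ _
    rw [hd, ← mul_assoc]
    exact NN_mul_vv_mem ((stairEquiv n) d).2 (MM_mul_pow_mem_NN n hμ _)
  | zero => rw [mul_zero]; exact zero_mem _
  | add x y _ _ hx hy => rw [mul_add]; exact add_mem hx hy
  | smul c x _ hx => rw [Algebra.mul_smul_comm]; exact Submodule.smul_mem _ _ hx

theorem keyInd (n : ℕ) :
    LinearIndependent (symmetricSubalgebra (Fin n) ℤ) (fun d : Stair n => xp d.1) ∧
    Submodule.span (symmetricSubalgebra (Fin n) ℤ)
      (Set.range fun d : Stair n => xp d.1) = ⊤ := by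
  induction n with
  | zero =>
    haveI : Unique (Stair 0) :=
      ⟨⟨⟨fun i => i.elim0, fun i => i.elim0⟩⟩, fun d => Subtype.ext (funext fun i => i.elim0)⟩
    have hxp1 : ∀ d : Stair 0, xp d.1 = 1 := by
      intro d; rw [xp]; simp
    have hsym : ∀ p : MvPolynomial (Fin 0) ℤ, p ∈ symmetricSubalgebra (Fin 0) ℤ := by
      intro p
      rw [mem_symmetricSubalgebra]
      intro e
      have he : (e : Fin 0 → Fin 0) = id := funext fun i => i.elim0
      rw [he, rename_id, AlgHom.id_apply]
    constructor
    · refine linearIndependent_unique_iff.mpr ?_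
      rw [hxp1]
      exact one_ne_zero
    · rw [eq_top_iff]
      rintro p -
      have : p = (⟨p, hsym p⟩ : symmetricSubalgebra (Fin 0) ℤ) • xp (default : Stair 0).1 := by
        rw [hxp1]
        show p = p * 1
        rw [mul_one]
      rw [this]
      exact Submodule.smul_mem _ _ (Submodule.subset_span ⟨default, rfl⟩)
  | succ n ih =>
    obtain ⟨hInd, hSpan⟩ := ih
    classical
    constructor
    · rw [linearIndependent_iff'']
      intro s g hg0 hsum d₀
      set ι := stairEquiv n with hι
      set t := s.image (fun d => (ι d).2) with ht
      set G : Fin (n+1) × Stair n → symmetricSubalgebra (Fin (n+1)) ℤ :=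
        fun p => g (ι.symm p) with hG
      have hsub : s ⊆ (Finset.univ ×ˢ t).image ι.symm := by
        intro d hd
        exact Finset.mem_image.mpr ⟨ι d, Finset.mem_product.mpr
          ⟨Finset.mem_univ _, Finset.mem_image.mpr ⟨d, hd, rfl⟩⟩, ι.symm_apply_apply d⟩
      have hbig : ∑ d ∈ (Finset.univ ×ˢ t).image ι.symm, g d • xp d.1
          = ∑ d ∈ s, g d • xp d.1 :=
        (Finset.sum_subset hsub fun d _ hd => by rw [hg0 d hd, zero_smul]).symm
      rw [hsum] at hbig
      rw [Finset.sum_image (fun a _ b _ h => ι.symm.injective h)] at hbig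
      have hterm : ∀ p : Fin (n+1) × Stair n, g (ι.symm p) • xp (ι.symm p).1
          = ((G p : MvPolynomial (Fin (n+1)) ℤ) * (X 0) ^ (p.1 : ℕ)) * vv p.2 := by
        intro p
        have h1 : (ι.symm p).1 = Fin.cons (p.1 : ℕ) p.2.1 := rfl
        show (g (ι.symm p) : MvPolynomial (Fin (n+1)) ℤ) * xp (ι.symm p).1 = _
        rw [h1, xp_cons, ← mul_assoc]
        rfl
      rw [Finset.sum_congr rfl fun p _ => hterm p] at hbig
      rw [Finset.sum_product_right] at hbig
      have hbig2 : ∑ d' ∈ t,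
          (∑ a : Fin (n+1), (G (a, d') : MvPolynomial (Fin (n+1)) ℤ) * (X 0) ^ (a : ℕ)) * vv d'
          = 0 := by
        rw [← hbig]
        refine Finset.sum_congr rfl fun d' _ => ?_
        rw [Finset.sum_mul]
      have hm : ∀ d' ∈ t, SymC (∑ a : Fin (n+1),
          (G (a, d') : MvPolynomial (Fin (n+1)) ℤ) * (X 0) ^ (a : ℕ)) := by
        intro d' _
        exact SymC_sum _ _ fun a _ => SymC_mul (SymC_sym (G (a, d')).2) (SymC_pow SymC_X0 _)
      have hmz := indep_v hInd t _ hm hbig2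
      by_cases hds : d₀ ∈ s
      · have ht0 : (ι d₀).2 ∈ t := Finset.mem_image.mpr ⟨d₀, hds, rfl⟩
        have hv := vandermonde_indep n (fun a => G (a, (ι d₀).2)) (hmz _ ht0)
        have := congrFun hv (ι d₀).1
        show g d₀ = 0
        have hGd : G ((ι d₀).1, (ι d₀).2) = g d₀ := by
          rw [hG]
          show g (ι.symm ((ι d₀).1, (ι d₀).2)) = g d₀
          rw [show ((ι d₀).1, (ι d₀).2) = ι d₀ from rfl, ι.symm_apply_apply]
        rw [← hGd]
        exact this
      · exact hg0 d₀ hds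
    · rw [eq_top_iff]
      rintro p -
      have main : ∀ r : MvPolynomial (Fin n) ℤ, ∀ k : ℕ,
          rename (Fin.succ : Fin n → Fin (n+1)) r * (X 0) ^ k
            ∈ Submodule.span (symmetricSubalgebra (Fin (n+1)) ℤ)
              (Set.range fun d : Stair (n+1) => xp d.1) := by
        intro r
        have hr : r ∈ Submodule.span (symmetricSubalgebra (Fin n) ℤ)
            (Set.range fun d : Stair n => xp d.1) := by rw [hSpan]; trivial
        induction hr using Submodule.span_induction with
        | mem r hrr =>
          obtain ⟨d', rfl⟩ := hrr
          intro k
          rw [mul_comm]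
          exact NN_mul_vv_mem d' (pow0_mem_NN n k)
        | zero => intro k; rw [map_zero, zero_mul]; exact zero_mem _
        | add x y _ _ hx hy => intro k; rw [map_add, add_mul]; exact add_mem (hx k) (hy k)
        | smul c x _ hx =>
          intro k
          have h1 : (c • x : MvPolynomial (Fin n) ℤ)
              = (c : MvPolynomial (Fin n) ℤ) * x := rfl
          rw [h1, map_mul, mul_assoc]
          exact MM_mul_span (symm_tail_mem_MM n c.2) (hx k)
      set φ := MvPolynomial.finSuccEquiv ℤ n with hφ
      have h1 : (φ p) = ∑ k ∈ Finset.range ((φ p).natDegree + 1),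
          Polynomial.C ((φ p).coeff k) * Polynomial.X ^ k := by
        conv_lhs => rw [Polynomial.as_sum_range' (φ p) _ (Nat.lt_succ_self _)]
        exact Finset.sum_congr rfl fun k _ => (Polynomial.C_mul_X_pow_eq_monomial).symm
      have h2 : p = ∑ k ∈ Finset.range ((φ p).natDegree + 1),
          rename (Fin.succ : Fin n → Fin (n+1)) ((φ p).coeff k) * (X 0) ^ k := by
        conv_lhs => rw [← φ.symm_apply_apply p, h1]
        rw [map_sum]
        refine Finset.sum_congr rfl fun k _ => ?_
        rw [map_mul, map_pow]
        congr 1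
        · rw [← finSuccEquiv_rename_succ ((φ p).coeff k), ← hφ, φ.symm_apply_apply]
        · congr 1
          rw [show (Polynomial.X : Polynomial (MvPolynomial (Fin n) ℤ))
              = φ (X 0) from (finSuccEquiv_X_zero).symm, φ.symm_apply_apply]
      rw [h2]
      exact sum_mem fun k _ => main _ k

lemma prod_sub_eq_factorial (n : ℕ) : (∏ i : Fin n, (n - (i : ℕ))) = n.factorial := by
  induction n with
  | zero => simp
  | succ n ih =>
    rw [Fin.prod_univ_succ]
    simp only [Fin.val_zero, Nat.sub_zero, Fin.val_succ]
    rw [Finset.prod_congr rfl fun (i : Fin n) _ => show n + 1 - ((i : ℕ) + 1) = n - (i : ℕ) by omega]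
    rw [ih]
    rw [Nat.factorial_succ]

lemma stair_card (n : ℕ) : Nat.card (Stair n) = n.factorial := by
  have e : Stair n ≃ (∀ i : Fin n, Fin (n - (i : ℕ))) :=
    { toFun := fun d i => ⟨d.1 i, by have := d.2 i; omega⟩
      invFun := fun g => ⟨fun i => (g i : ℕ), fun i => by have := (g i).isLt; show ((g i : ℕ)) + (i:ℕ) < n; omega⟩
      left_inv := fun d => Subtype.ext (funext fun i => rfl)
      right_inv := fun g => funext fun i => Fin.ext rfl }
  rw [Nat.card_congr e]
  rw [Nat.card_eq_fintype_card, Fintype.card_pi]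
  simp only [Fintype.card_fin]
  exact prod_sub_eq_factorial n

/-- `ℤ[x_1,…,x_n]` is a free module over the subring of symmetric polynomials, with basis
the monomials `x_1^{a_1}⋯x_n^{a_n}` with `0 ≤ a_i ≤ n − i` (0-based: `a_i + i < n`);
in particular its rank is `n!`. -/
theorem polynomial_free_over_symmetric (n : ℕ) :
    (∃ B : Module.Basis {d : Fin n → ℕ // ∀ i : Fin n, d i + (i : ℕ) < n}
        (symmetricSubalgebra (Fin n) ℤ) (MvPolynomial (Fin n) ℤ),
      ∀ d, B d = ∏ i : Fin n, X i ^ (d.1 i)) ∧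
    Nat.card {d : Fin n → ℕ // ∀ i : Fin n, d i + (i : ℕ) < n} = n.factorial := by
  obtain ⟨hInd, hSpan⟩ := keyInd n
  refine ⟨⟨Module.Basis.mk hInd (by exact hSpan.ge), fun d => by exact Module.Basis.mk_apply hInd _ d⟩, stair_card n⟩
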